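/- Let q be a nonnegative quadratic form on a Hilbert space with associated symmetric bilinear form β satisfying |β(u,w)| ≤ √(q(u) q(w)). Suppose v = u + w with q(v) ≤ q(u)/N² for some N = ‖normalization‖ satisfying N² → 1, together with ‖w‖ ≤ Cε and an integration-by-parts bound |β(u, w)| ≤ ‖Δu‖‖w‖ with ‖Δu‖² ≤ Cε⁴. If q(u) ~ σε² as ε → 0, then q(w)/ε² → 0 and hence q(v)/ε² → σ. -/

import Mathlib

open Filter Topology

/-- Abstract error estimate: if v = u + w, q(v) ≤ q(u)/N² with N² → 1, ‖w‖ ≤ Cε,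
|β(u,w)| ≤ ‖Δu‖‖w‖ with ‖Δu‖² ≤ Cε⁴, and q(u) ~ σε², then q(w)/ε² → 0 and
q(v)/ε² → σ. Here q(x) = β(x,x) is a nonnegative quadratic form with symmetric
bilinear form β satisfying Cauchy–Schwarz. -/
theorem stmt19 {H : Type*} [NormedAddCommGroup H] [NormedSpace ℝ H]
    (β : H → H → ℝ) (q : H → ℝ)
    (hqβ : ∀ x, q x = β x x) (hq : ∀ x, 0 ≤ q x)
    (hexp : ∀ x y : H, q (x + y) = q x + 2 * β x y + q y)
    (hCS : ∀ x y : H, |β x y| ≤ Real.sqrt (q x * q y))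
    (v u w : ℝ → H) (N Δ : ℝ → ℝ) (σ C : ℝ) (hC : 0 < C) (hσ : 0 < σ)
    (hvuw : ∀ ε > (0:ℝ), v ε = u ε + w ε)
    (hqv : ∀ ε > (0:ℝ), q (v ε) ≤ q (u ε) / (N ε) ^ 2)
    (hN : Tendsto (fun ε => (N ε) ^ 2) (𝓝[>] (0:ℝ)) (𝓝 1))
    (hNpos : ∀ ε > (0:ℝ), 0 < N ε)
    (hwnorm : ∀ ε > (0:ℝ), ‖w ε‖ ≤ C * ε)
    (hibp : ∀ ε > (0:ℝ), |β (u ε) (w ε)| ≤ Δ ε * ‖w ε‖)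
    (hΔ : ∀ ε > (0:ℝ), (Δ ε) ^ 2 ≤ C * ε ^ 4)
    (hqu : Tendsto (fun ε => q (u ε) / (σ * ε ^ 2)) (𝓝[>] (0:ℝ)) (𝓝 1)) :
    Tendsto (fun ε => q (w ε) / ε ^ 2) (𝓝[>] (0:ℝ)) (𝓝 0) ∧
    Tendsto (fun ε => q (v ε) / ε ^ 2) (𝓝[>] (0:ℝ)) (𝓝 σ) := by
  have hev : ∀ᶠ ε in 𝓝[>] (0:ℝ), (0:ℝ) < ε := self_mem_nhdsWithin
  -- bound on the cross term
  have hβbound : ∀ ε > (0:ℝ), |β (u ε) (w ε)| ≤ Real.sqrt C * C * ε ^ 3 := by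
    intro ε hε0
    have hΔ' : |Δ ε| ≤ Real.sqrt C * ε ^ 2 := by
      have h2 : Real.sqrt ((Δ ε) ^ 2) ≤ Real.sqrt (C * ε ^ 4) :=
        Real.sqrt_le_sqrt (hΔ ε hε0)
      rwa [Real.sqrt_sq_eq_abs,
        show C * ε ^ 4 = (Real.sqrt C * ε ^ 2) ^ 2 by
          rw [mul_pow, Real.sq_sqrt hC.le]; ring,
        Real.sqrt_sq (by positivity)] at h2
    have hw := hwnorm ε hε0
    calc |β (u ε) (w ε)| ≤ Δ ε * ‖w ε‖ := hibp ε hε0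
      _ ≤ |Δ ε| * ‖w ε‖ := mul_le_mul_of_nonneg_right (le_abs_self _) (norm_nonneg _)
      _ ≤ (Real.sqrt C * ε ^ 2) * (C * ε) :=
          mul_le_mul hΔ' hw (norm_nonneg _) (by positivity)
      _ = Real.sqrt C * C * ε ^ 3 := by ring
  -- limit of q(u)/ε²
  have hqu2 : Tendsto (fun ε => q (u ε) / ε ^ 2) (𝓝[>] (0:ℝ)) (𝓝 σ) := by
    have h := hqu.const_mul σ
    rw [mul_one] at h
    refine h.congr' ?_
    filter_upwards [hev] with ε hε0
    field_simp
  -- limit of 1/N² - 1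
  have hNinv : Tendsto (fun ε => 1 / (N ε) ^ 2 - 1) (𝓝[>] (0:ℝ)) (𝓝 0) := by
    have h := (hN.inv₀ one_ne_zero).sub_const 1
    simpa using h
  -- the cube term
  have hcube : Tendsto (fun ε : ℝ => 2 * (Real.sqrt C * C) * ε) (𝓝[>] (0:ℝ)) (𝓝 0) := by
    have : Tendsto (fun ε : ℝ => 2 * (Real.sqrt C * C) * ε) (𝓝 (0:ℝ)) (𝓝 0) := by
      simpa using (tendsto_id.const_mul (2 * (Real.sqrt C * C)) :
        Tendsto (fun ε : ℝ => 2 * (Real.sqrt C * C) * ε) (𝓝 0) (𝓝 (2 * (Real.sqrt C * C) * 0)))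
    exact this.mono_left nhdsWithin_le_nhds
  -- part 1
  have hg : Tendsto (fun ε => q (u ε) / ε ^ 2 * (1 / (N ε) ^ 2 - 1)
      + 2 * (Real.sqrt C * C) * ε) (𝓝[>] (0:ℝ)) (𝓝 0) := by
    have := (hqu2.mul hNinv).add hcube
    simpa using this
  have part1 : Tendsto (fun ε => q (w ε) / ε ^ 2) (𝓝[>] (0:ℝ)) (𝓝 0) := by
    refine tendsto_of_tendsto_of_tendsto_of_le_of_le' tendsto_const_nhds hg ?_ ?_
    · filter_upwards [hev] with ε hε0
      have := hq (w ε)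
      positivity
    · filter_upwards [hev] with ε hε0
      have hexp' := hexp (u ε) (w ε)
      have hqv' := hqv ε hε0
      rw [hvuw ε hε0] at hqv'
      have hβ := hβbound ε hε0
      have hN2 : (0:ℝ) < (N ε) ^ 2 := pow_pos (hNpos ε hε0) 2
      have hneg : -β (u ε) (w ε) ≤ Real.sqrt C * C * ε ^ 3 :=
        (neg_le_abs _).trans hβ
      have h1 : q (w ε) ≤ q (u ε) * (1 / (N ε) ^ 2 - 1) + 2 * (Real.sqrt C * C) * ε ^ 3 := by
        have hdiv : q (u ε) / (N ε) ^ 2 = q (u ε) * (1 / (N ε) ^ 2) := by ring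
        nlinarith [hqv', hexp']
      have hε2 : (0:ℝ) < ε ^ 2 := by positivity
      calc q (w ε) / ε ^ 2
          ≤ (q (u ε) * (1 / (N ε) ^ 2 - 1) + 2 * (Real.sqrt C * C) * ε ^ 3) / ε ^ 2 := by
            gcongr
        _ = q (u ε) / ε ^ 2 * (1 / (N ε) ^ 2 - 1) + 2 * (Real.sqrt C * C) * ε := by
            field_simp
  -- cross-term limit
  have hβlim : Tendsto (fun ε => 2 * β (u ε) (w ε) / ε ^ 2) (𝓝[>] (0:ℝ)) (𝓝 0) := by
    refine squeeze_zero_norm' ?_ hcube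
    filter_upwards [hev] with ε hε0
    have hβ := hβbound ε hε0
    have hε2 : (0:ℝ) < ε ^ 2 := by positivity
    rw [Real.norm_eq_abs, abs_div, abs_of_pos hε2, div_le_iff₀ hε2, abs_mul, abs_two]
    calc 2 * |β (u ε) (w ε)| ≤ 2 * (Real.sqrt C * C * ε ^ 3) := by linarith
      _ = 2 * (Real.sqrt C * C) * ε * ε ^ 2 := by ring
  refine ⟨part1, ?_⟩
  have h := (hqu2.add hβlim).add part1
  rw [add_zero, add_zero] at h
  refine h.congr' ?_
  filter_upwards [hev] with ε hε0
  rw [hvuw ε hε0, hexp (u ε) (w ε)]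
  ring
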